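/- Let ν ≥ 0 and let w : ℤ × ℝ → ℂ be measurable. Define W(t,k,η) = w(k, η + k·t) · exp(−ν ∫₀ᵗ (k² + (η + k·s)²) ds). Then for every t ≥ 0, ∑_{k ≠ 0} ∫_ℝ |W(t,k,η)|² dη ≤ e^{−ν t³/6} · ∑_{k ≠ 0} ∫_ℝ |w(k,η)|² dη (as an inequality of extended nonnegative reals). -/

import Mathlib

open MeasureTheory
open scoped ENNReal NNReal

/-- `L²` enhanced dissipation for the nonzero-in-`x` modes of the linearized
Couette flow: `∑_{k ≠ 0} ∫ |W(t,k,η)|² dη ≤ e^{−ν t³/6} ∑_{k ≠ 0} ∫ |w(k,η)|² dη`. -/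
theorem stmt_3 (ν : ℝ) (hν : 0 ≤ ν) (w : ℤ × ℝ → ℂ) (hw : Measurable w)
    (W : ℝ → ℤ → ℝ → ℂ)
    (hW : ∀ (t : ℝ) (k : ℤ) (η : ℝ), W t k η =
      w (k, η + (k : ℝ) * t) *
        (Real.exp (-ν * ∫ s in (0:ℝ)..t, ((k : ℝ) ^ 2 + (η + (k : ℝ) * s) ^ 2)) : ℂ)) :
    ∀ t : ℝ, 0 ≤ t →
      ∑' k : {k : ℤ // k ≠ 0}, ∫⁻ η : ℝ, (‖W t (k : ℤ) η‖₊ : ℝ≥0∞) ^ 2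
        ≤ ENNReal.ofReal (Real.exp (-(ν * t ^ 3 / 6))) *
            ∑' k : {k : ℤ // k ≠ 0}, ∫⁻ η : ℝ, (‖w ((k : ℤ), η)‖₊ : ℝ≥0∞) ^ 2 := by
  intro t ht
  have key : ∀ k : {k : ℤ // k ≠ 0},
      ∫⁻ η : ℝ, (‖W t (k : ℤ) η‖₊ : ℝ≥0∞) ^ 2
        ≤ ENNReal.ofReal (Real.exp (-(ν * t ^ 3 / 6))) *
            ∫⁻ η : ℝ, (‖w ((k : ℤ), η)‖₊ : ℝ≥0∞) ^ 2 := by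
    rintro ⟨k, hk⟩
    have hk2 : (1 : ℝ) ≤ (k : ℝ) ^ 2 := by
      have : (1 : ℤ) ≤ k ^ 2 := by rcases hk.lt_or_gt with h | h <;> nlinarith
      exact_mod_cast this
    have hpt : ∀ η : ℝ, (‖W t k η‖₊ : ℝ≥0∞) ^ 2 ≤
        ENNReal.ofReal (Real.exp (-(ν * t ^ 3 / 6))) *
          (‖w (k, η + (k : ℝ) * t)‖₊ : ℝ≥0∞) ^ 2 := by
      intro η
      set I : ℝ := ∫ s in (0:ℝ)..t, ((k : ℝ) ^ 2 + (η + (k : ℝ) * s) ^ 2) with hI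
      have hIval : I = ((k:ℝ)^2 + η^2) * t + η * (k:ℝ) * t^2 + (k:ℝ)^2 * t^3 / 3 := by
        rw [hI]
        rw [intervalIntegral.integral_eq_sub_of_hasDerivAt
          (f := fun s : ℝ => ((k:ℝ)^2 + η^2) * s + η * (k:ℝ) * s^2 + (k:ℝ)^2 * s^3 / 3)
          (fun s _ => by
            have h1 : HasDerivAt (fun s : ℝ => ((k:ℝ)^2 + η^2) * s + η * (k:ℝ) * s^2 + (k:ℝ)^2 * s^3 / 3)
                (((k:ℝ)^2 + η^2) * 1 + η * (k:ℝ) * (2 * s ^ 1) + (k:ℝ)^2 * (3 * s ^ 2) / 3) s := by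
              exact (((hasDerivAt_id s).const_mul _).add
                (((hasDerivAt_pow 2 s).const_mul _))).add
                (((hasDerivAt_pow 3 s).const_mul ((k:ℝ)^2)).div_const 3)
            refine h1.congr_deriv ?_
            ring)
          ((Continuous.intervalIntegrable (by continuity) 0 t))]
        ring
      have hge : t ^ 3 / 12 ≤ I := by
        rw [hIval]
        nlinarith [sq_nonneg (η + (k:ℝ) * t / 2), sq_nonneg η, mul_nonneg ht (sq_nonneg η),
          pow_nonneg ht 3, mul_nonneg ht (le_trans zero_le_one hk2)]
      rw [hW, nnnorm_mul, ENNReal.coe_mul, mul_pow, mul_comm]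
      gcongr
      have hnorm : (‖(Real.exp (-ν * I) : ℂ)‖₊ : ℝ≥0∞) = ENNReal.ofReal (Real.exp (-ν * I)) := by
        rw [← enorm_eq_nnnorm, ← ofReal_norm, Complex.norm_real,
          Real.norm_of_nonneg (Real.exp_nonneg _)]
      rw [← hI, hnorm, ← ENNReal.ofReal_pow (Real.exp_nonneg _)]
      apply ENNReal.ofReal_le_ofReal
      rw [← Real.exp_nat_mul]
      apply Real.exp_le_exp.2
      push_cast
      nlinarith [mul_le_mul_of_nonneg_left hge hν]
    calc ∫⁻ η : ℝ, (‖W t k η‖₊ : ℝ≥0∞) ^ 2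
        ≤ ∫⁻ η : ℝ, ENNReal.ofReal (Real.exp (-(ν * t ^ 3 / 6))) *
            (‖w (k, η + (k : ℝ) * t)‖₊ : ℝ≥0∞) ^ 2 := lintegral_mono hpt
      _ = ENNReal.ofReal (Real.exp (-(ν * t ^ 3 / 6))) *
            ∫⁻ η : ℝ, (‖w (k, η + (k : ℝ) * t)‖₊ : ℝ≥0∞) ^ 2 :=
          lintegral_const_mul' _ _ ENNReal.ofReal_ne_top
      _ = ENNReal.ofReal (Real.exp (-(ν * t ^ 3 / 6))) *
            ∫⁻ η : ℝ, (‖w (k, η)‖₊ : ℝ≥0∞) ^ 2 := by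
          rw [lintegral_add_right_eq_self (fun η => (‖w (k, η)‖₊ : ℝ≥0∞) ^ 2) ((k:ℝ) * t)]
  calc ∑' k : {k : ℤ // k ≠ 0}, ∫⁻ η : ℝ, (‖W t (k : ℤ) η‖₊ : ℝ≥0∞) ^ 2
      ≤ ∑' k : {k : ℤ // k ≠ 0}, ENNReal.ofReal (Real.exp (-(ν * t ^ 3 / 6))) *
          ∫⁻ η : ℝ, (‖w ((k : ℤ), η)‖₊ : ℝ≥0∞) ^ 2 := ENNReal.tsum_le_tsum key
    _ = _ := ENNReal.tsum_mul_left
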